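/- Let G be a finite simple graph and a, b two nonadjacent vertices of G with S_{a,b} ≠ ∅ and k_min((a,b)) ≤ |S_{a,b}| + 1. Then every edge e' of G whose truss number changes after inserting (a,b) (i.e., φ_{G+(a,b)}(e') ≠ φ_G(e')) satisfies k_min((a,b)) ≤ φ_G(e') ≤ min(|S_{a,b}| + 1, k_max((a,b))). -/

import Mathlib

open SimpleGraph

variable {V : Type*}

/-- `H` is a `k`-truss of `G`: a connected subgraph with at least one edge in which
every edge lies in at least `k - 2` triangles of `H` (i.e. the endpoints of every edge
have at least `k - 2` common neighbors in `H`). -/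
def IsTruss (G : SimpleGraph V) (k : ℕ) (H : G.Subgraph) : Prop :=
  H.Connected ∧ H.edgeSet.Nonempty ∧
    ∀ a b : V, H.Adj a b → k - 2 ≤ {c : V | H.Adj a c ∧ H.Adj b c}.ncard

/-- The truss number `φ_G(e)` of an edge `e`: the largest `k` such that `e` lies in some
`k`-truss of `G`. -/
noncomputable def trussNumber (G : SimpleGraph V) (e : Sym2 V) : ℕ :=
  sSup {k : ℕ | ∃ H : G.Subgraph, IsTruss G k H ∧ e ∈ H.edgeSet}

/-- The support of the edge `(a, b)` in a subgraph `H`: the number of triangles of `H`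
containing it, i.e. the number of common neighbors of `a` and `b` in `H`. -/
noncomputable def suppIn {G : SimpleGraph V} (H : G.Subgraph) (a b : V) : ℕ :=
  {c : V | H.Adj a c ∧ H.Adj b c}.ncard

/-- The support of the edge `(a, b)` in `G`. -/
noncomputable def suppG (G : SimpleGraph V) (a b : V) : ℕ :=
  {c : V | G.Adj a c ∧ G.Adj b c}.ncard

/-- `S_{a,b}`: the common neighbors of `a` and `b` in `G`. -/
def commonNbrs (G : SimpleGraph V) (a b : V) : Set V :=
  {c : V | G.Adj a c ∧ G.Adj b c}

/-- `E_{S_{a,b} ↔ {a,b}}`: the edges of `G` joining a common neighbor of `a` and `b`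
to `a` or to `b`. -/
def sideEdges (G : SimpleGraph V) (a b : V) : Set (Sym2 V) :=
  {e | ∃ c, G.Adj a c ∧ G.Adj b c ∧ (e = s(a, c) ∨ e = s(b, c))}

/-- `k_min((a,b))`: minimum truss number among the edges of `E_{S_{a,b} ↔ {a,b}}`. -/
noncomputable def kmin (G : SimpleGraph V) (a b : V) : ℕ :=
  sInf (trussNumber G '' sideEdges G a b)

/-- `k_max((a,b))`: maximum truss number among the edges of `E_{S_{a,b} ↔ {a,b}}`. -/
noncomputable def kmax (G : SimpleGraph V) (a b : V) : ℕ :=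
  sSup (trussNumber G '' sideEdges G a b)

/-- `G + (a,b)`: the graph obtained from `G` by inserting the edge `(a, b)`. -/
def insertEdge (G : SimpleGraph V) (a b : V) : SimpleGraph V :=
  G ⊔ fromEdgeSet {s(a, b)}

lemma trussSet_ub [Fintype V] (G : SimpleGraph V) (e : Sym2 V) :
    Fintype.card V + 2 ∈ upperBounds {k : ℕ | ∃ H : G.Subgraph, IsTruss G k H ∧ e ∈ H.edgeSet} := by
  rintro k ⟨H, ⟨-, ⟨f, hf⟩, htri⟩, -⟩
  induction f using Sym2.ind with
  | _ x y =>
    have hxy : H.Adj x y := hf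
    have h1 := htri x y hxy
    have h2 : {c : V | H.Adj x c ∧ H.Adj y c}.ncard ≤ Fintype.card V := by
      have := Set.ncard_le_ncard (Set.subset_univ {c : V | H.Adj x c ∧ H.Adj y c}) Set.finite_univ
      simpa [Set.ncard_univ, Nat.card_eq_fintype_card] using this
    omega

lemma trussSet_bdd [Fintype V] (G : SimpleGraph V) (e : Sym2 V) :
    BddAbove {k : ℕ | ∃ H : G.Subgraph, IsTruss G k H ∧ e ∈ H.edgeSet} :=
  ⟨Fintype.card V + 2, trussSet_ub G e⟩

lemma le_trussNumber [Fintype V] {G : SimpleGraph V} {k : ℕ} {H : G.Subgraph} {e : Sym2 V}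
    (h : IsTruss G k H) (he : e ∈ H.edgeSet) : k ≤ trussNumber G e :=
  le_csSup (trussSet_bdd G e) ⟨H, h, he⟩

lemma trussNumber_le_card [Fintype V] (G : SimpleGraph V) (e : Sym2 V) :
    trussNumber G e ≤ Fintype.card V + 2 :=
  csSup_le' (trussSet_ub G e)

lemma two_mem_trussSet {G : SimpleGraph V} {e : Sym2 V} (he : e ∈ G.edgeSet) :
    2 ∈ {k : ℕ | ∃ H : G.Subgraph, IsTruss G k H ∧ e ∈ H.edgeSet} := by
  induction e using Sym2.ind with
  | _ x y =>
    have hxy : G.Adj x y := he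
    exact ⟨G.subgraphOfAdj hxy, ⟨Subgraph.subgraphOfAdj_connected hxy, ⟨s(x,y), by simp⟩,
      fun a b _ => by simp⟩, by simp⟩

lemma two_le_trussNumber [Fintype V] {G : SimpleGraph V} {e : Sym2 V} (he : e ∈ G.edgeSet) :
    2 ≤ trussNumber G e :=
  le_csSup (trussSet_bdd G e) (two_mem_trussSet he)

lemma IsTruss.anti {G : SimpleGraph V} {k m : ℕ} {H : G.Subgraph}
    (h : IsTruss G m H) (hkm : k ≤ m) : IsTruss G k H :=
  ⟨h.1, h.2.1, fun a b hab => le_trans (by omega) (h.2.2 a b hab)⟩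

lemma exists_truss [Fintype V] {G : SimpleGraph V} {e : Sym2 V} {k : ℕ}
    (he : e ∈ G.edgeSet) (hk : k ≤ trussNumber G e) :
    ∃ H : G.Subgraph, IsTruss G k H ∧ e ∈ H.edgeSet := by
  have hmem := Nat.sSup_mem ⟨2, two_mem_trussSet he⟩ (trussSet_bdd G e)
  obtain ⟨H, hH, heH⟩ := hmem
  exact ⟨H, hH.anti hk, heH⟩

def liftSub {G G' : SimpleGraph V} (h : G ≤ G') (H : G.Subgraph) : G'.Subgraph where
  verts := H.verts
  Adj := H.Adj
  adj_sub := fun hvw => h (H.adj_sub hvw)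
  edge_vert := H.edge_vert
  symm := H.symm

lemma liftSub_truss {G G' : SimpleGraph V} (h : G ≤ G') {k : ℕ} {H : G.Subgraph}
    (ht : IsTruss G k H) : IsTruss G' k (liftSub h H) := by
  refine ⟨⟨ht.1.coe⟩, ht.2.1, ht.2.2⟩

lemma trussNumber_mono [Fintype V] {G G' : SimpleGraph V} (h : G ≤ G') {e : Sym2 V}
    (he : e ∈ G.edgeSet) : trussNumber G e ≤ trussNumber G' e := by
  refine csSup_le_csSup (trussSet_bdd G' e) ⟨2, two_mem_trussSet he⟩ ?_
  rintro k ⟨H, hH, heH⟩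
  exact ⟨liftSub h H, liftSub_truss h hH, heH⟩

lemma insertEdge_adj {G : SimpleGraph V} {a b x y : V} :
    (insertEdge G a b).Adj x y ↔ G.Adj x y ∨ (s(x, y) = s(a, b) ∧ x ≠ y) := by
  simp [insertEdge]

lemma adj_of_insert {G : SimpleGraph V} {a b x y : V}
    (h : (insertEdge G a b).Adj x y) (hne : s(x, y) ≠ s(a, b)) : G.Adj x y := by
  rcases insertEdge_adj.1 h with h' | h'
  · exact h'
  · exact absurd h'.1 hne

def delSub (G : SimpleGraph V) (a b : V) (H : (insertEdge G a b).Subgraph) : G.Subgraph where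
  verts := H.verts
  Adj x y := H.Adj x y ∧ s(x, y) ≠ s(a, b)
  adj_sub := fun h => adj_of_insert (H.adj_sub h.1) h.2
  edge_vert := fun h => H.edge_vert h.1
  symm := by
    constructor
    rintro x y ⟨h1, h2⟩
    exact ⟨h1.symm, by rwa [Sym2.eq_swap]⟩

lemma delSub_connected {G : SimpleGraph V} {a b c : V}
    {H : (insertEdge G a b).Subgraph} (hconn : H.Connected)
    (hac : H.Adj a c) (hbc : H.Adj b c) :
    (delSub G a b H).Connected := by
  set K := delSub G a b H with hK
  have ha : a ∈ H.verts := hac.fst_mem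
  have hb : b ∈ H.verts := hbc.fst_mem
  have hc : c ∈ H.verts := hac.snd_mem
  have hcb : c ≠ b := fun h => hbc.ne (h ▸ rfl)
  have hca : c ≠ a := fun h => hac.ne (h ▸ rfl)
  have kac : K.Adj a c := ⟨hac, fun h => by
    rcases Sym2.eq_iff.1 h with ⟨-, h2⟩ | ⟨-, h2⟩
    exacts [hcb h2, hca h2]⟩
  have kbc : K.Adj b c := ⟨hbc, fun h => by
    rcases Sym2.eq_iff.1 h with ⟨-, h2⟩ | ⟨-, h2⟩
    exacts [hcb h2, hca h2]⟩
  have kac' : K.coe.Adj ⟨a, ha⟩ ⟨c, hc⟩ := kac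
  have kbc' : K.coe.Adj ⟨b, hb⟩ ⟨c, hc⟩ := kbc
  rw [Subgraph.connected_iff]
  refine ⟨?_, hconn.nonempty⟩
  rw [Subgraph.preconnected_iff]
  have key : ∀ (x y : H.verts) (_ : H.coe.Walk x y),
      K.coe.Reachable ⟨x.1, x.2⟩ ⟨y.1, y.2⟩ := by
    intro x y w
    induction w with
    | nil => exact Reachable.refl _
    | @cons u v t h p ih =>
      refine Reachable.trans ?_ ih
      by_cases hcase : s(u.1, v.1) = s(a, b)
      · rcases Sym2.eq_iff.1 hcase with ⟨h1, h2⟩ | ⟨h1, h2⟩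
        · have e1 : (⟨u.1, u.2⟩ : K.verts) = ⟨a, ha⟩ := Subtype.ext h1
          have e2 : (⟨v.1, v.2⟩ : K.verts) = ⟨b, hb⟩ := Subtype.ext h2
          rw [e1, e2]
          exact (SimpleGraph.Adj.reachable kac').trans (SimpleGraph.Adj.reachable kbc').symm
        · have e1 : (⟨u.1, u.2⟩ : K.verts) = ⟨b, hb⟩ := Subtype.ext h1
          have e2 : (⟨v.1, v.2⟩ : K.verts) = ⟨a, ha⟩ := Subtype.ext h2
          rw [e1, e2]
          exact (SimpleGraph.Adj.reachable kbc').trans (SimpleGraph.Adj.reachable kac').symm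
      · exact SimpleGraph.Adj.reachable (⟨h, hcase⟩ : K.coe.Adj ⟨u.1, u.2⟩ ⟨v.1, v.2⟩)
  intro x y
  obtain ⟨w⟩ := hconn.coe ⟨x.1, x.2⟩ ⟨y.1, y.2⟩
  exact key _ _ w

lemma delSub_tri [Fintype V] {G : SimpleGraph V} {a b : V}
    {H : (insertEdge G a b).Subgraph} {k : ℕ}
    (ht : ∀ p q : V, H.Adj p q → k - 2 ≤ {c : V | H.Adj p c ∧ H.Adj q c}.ncard)
    {x y : V} (hxy : (delSub G a b H).Adj x y) :
    k - 3 ≤ {c : V | (delSub G a b H).Adj x c ∧ (delSub G a b H).Adj y c}.ncard := by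
  classical
  set K := delSub G a b H with hK
  set z : V := if x = a ∨ y = a then b else a with hz
  have hsub : {c : V | H.Adj x c ∧ H.Adj y c} ⊆
      {c : V | K.Adj x c ∧ K.Adj y c} ∪ {z} := by
    intro d hd
    by_cases hdk : K.Adj x d ∧ K.Adj y d
    · exact Or.inl hdk
    · right
      have hxd : H.Adj x d := hd.1
      have hyd : H.Adj y d := hd.2
      have : s(x, d) = s(a, b) ∨ s(y, d) = s(a, b) := by
        by_contra hcon
        push_neg at hcon
        exact hdk ⟨⟨hxd, hcon.1⟩, ⟨hyd, hcon.2⟩⟩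
      have hxyne : s(x, y) ≠ s(a, b) := hxy.2
      rcases this with h | h
      · rcases Sym2.eq_iff.1 h with ⟨h1, h2⟩ | ⟨h1, h2⟩
        · simp only [Set.mem_singleton_iff, hz, if_pos (Or.inl h1)]
          exact h2
        · have hxa : x ≠ a := fun hxa => (hxd.ne) (h2 ▸ hxa ▸ rfl)
          have hya : y ≠ a := fun hya => hxyne (by rw [hya, h1, Sym2.eq_swap])
          simp only [Set.mem_singleton_iff, hz, if_neg (by tauto : ¬(x = a ∨ y = a))]
          exact h2
      · rcases Sym2.eq_iff.1 h with ⟨h1, h2⟩ | ⟨h1, h2⟩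
        · simp only [Set.mem_singleton_iff, hz, if_pos (Or.inr h1)]
          exact h2
        · have hya : y ≠ a := fun hya => (hyd.ne) (h2 ▸ hya ▸ rfl)
          have hxa : x ≠ a := fun hxa => hxyne (by rw [hxa, h1])
          simp only [Set.mem_singleton_iff, hz, if_neg (by tauto : ¬(x = a ∨ y = a))]
          exact h2
  have h1 := ht x y hxy.1
  have h2 : {c : V | H.Adj x c ∧ H.Adj y c}.ncard ≤
      {c : V | K.Adj x c ∧ K.Adj y c}.ncard + 1 := by
    calc {c : V | H.Adj x c ∧ H.Adj y c}.ncard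
        ≤ ({c : V | K.Adj x c ∧ K.Adj y c} ∪ {z}).ncard :=
          Set.ncard_le_ncard hsub (Set.toFinite _)
      _ ≤ {c : V | K.Adj x c ∧ K.Adj y c}.ncard + ({z} : Set V).ncard :=
          Set.ncard_union_le _ _
      _ = {c : V | K.Adj x c ∧ K.Adj y c}.ncard + 1 := by rw [Set.ncard_singleton]
  omega

lemma connected_sup_iSup {G : SimpleGraph V} {ι : Sort*} (K0 : G.Subgraph) (T : ι → G.Subgraph)
    (h0 : K0.Connected) (hT : ∀ i, (T i).Connected)
    (hmeet : ∀ i, ((T i).verts ∩ K0.verts).Nonempty) :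
    (K0 ⊔ ⨆ i, T i).Connected := by
  set U := K0 ⊔ ⨆ i, T i with hU
  have hK0le : K0 ≤ U := le_sup_left
  have hTle : ∀ i, T i ≤ U := fun i => le_trans (le_iSup T i) le_sup_right
  obtain ⟨v0, hv0⟩ := h0.nonempty
  rw [Subgraph.connected_iff]
  refine ⟨?_, ⟨v0, hK0le.1 hv0⟩⟩
  rw [Subgraph.preconnected_iff]
  have anchor : ∀ v : U.verts, U.coe.Reachable v ⟨v0, hK0le.1 hv0⟩ := by
    rintro ⟨v, hv⟩
    have hv' : v ∈ K0.verts ∪ ⋃ i, (T i).verts := by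
      simpa [hU, Subgraph.verts_sup, Subgraph.verts_iSup] using hv
    rcases hv' with hv' | hv'
    · exact Reachable.map (Subgraph.inclusion hK0le) (h0 ⟨v, hv'⟩ ⟨v0, hv0⟩)
    · rw [Set.mem_iUnion] at hv'
      obtain ⟨i, hvs⟩ := hv'
      obtain ⟨w, hw1, hw2⟩ := hmeet i
      exact Reachable.trans
        (Reachable.map (Subgraph.inclusion (hTle i)) ((hT i) ⟨v, hvs⟩ ⟨w, hw1⟩))
        (Reachable.map (Subgraph.inclusion hK0le) (h0 ⟨w, hw2⟩ ⟨v0, hv0⟩))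
  intro x y
  exact (anchor x).trans (anchor y).symm

theorem stmt13 [Fintype V] (G : SimpleGraph V) (a b : V) (hab : a ≠ b)
    (hnadj : ¬ G.Adj a b) (hS : (commonNbrs G a b).Nonempty)
    (hk : kmin G a b ≤ (commonNbrs G a b).ncard + 1) :
    ∀ e' ∈ G.edgeSet, trussNumber (insertEdge G a b) e' ≠ trussNumber G e' →
      kmin G a b ≤ trussNumber G e' ∧
      trussNumber G e' ≤ min ((commonNbrs G a b).ncard + 1) (kmax G a b) := by
  intro e' he' hne
  induction e' using Sym2.ind with
  | _ ex ey =>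
  rw [mem_edgeSet] at he'
  set G' := insertEdge G a b with hG'
  have hle : G ≤ G' := le_sup_left
  set t := trussNumber G s(ex, ey) with ht
  set k := trussNumber G' s(ex, ey) with hk'
  have htk : t < k :=
    lt_of_le_of_ne (trussNumber_mono hle ((mem_edgeSet G).2 he')) (Ne.symm hne)
  have ht2 : 2 ≤ t := two_le_trussNumber ((mem_edgeSet G).2 he')
  have he'G' : s(ex, ey) ∈ G'.edgeSet := (mem_edgeSet G').2 (hle he')
  obtain ⟨H, hH, heH⟩ := exists_truss he'G' (le_refl k)
  have heHadj : H.Adj ex ey := heH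
  -- the inserted edge must be in H
  have hHab : H.Adj a b := by
    by_contra hnab
    have hadj : ∀ x y : V, H.Adj x y → G.Adj x y := by
      intro x y h
      refine adj_of_insert (H.adj_sub h) ?_
      intro hs
      rcases Sym2.eq_iff.1 hs with ⟨h1, h2⟩ | ⟨h1, h2⟩
      · exact hnab (h1 ▸ h2 ▸ h)
      · exact hnab (h1 ▸ h2 ▸ h.symm)
    have hKt : IsTruss G k ⟨H.verts, H.Adj, fun h => hadj _ _ h, H.edge_vert, H.symm⟩ :=
      ⟨⟨hH.1.coe⟩, hH.2.1, hH.2.2⟩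
    have : k ≤ t := le_trussNumber hKt heH
    omega
  have htri := hH.2.2
  have hcard : k - 2 ≤ {c : V | H.Adj a c ∧ H.Adj b c}.ncard := htri a b hHab
  have hSsub : {c : V | H.Adj a c ∧ H.Adj b c} ⊆ commonNbrs G a b := by
    rintro c ⟨h1, h2⟩
    refine ⟨adj_of_insert (H.adj_sub h1) ?_, adj_of_insert (H.adj_sub h2) ?_⟩
    · intro hs
      rcases Sym2.eq_iff.1 hs with ⟨-, hcb⟩ | ⟨-, hca⟩
      · exact h2.ne (hcb ▸ rfl)
      · exact h1.ne hca.symm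
    · intro hs
      rcases Sym2.eq_iff.1 hs with ⟨hba, hcb⟩ | ⟨-, hca⟩
      · exact h2.ne (hcb ▸ rfl)
      · exact h1.ne hca.symm
  have hk3 : 3 ≤ k := by omega
  have hSHne : {c : V | H.Adj a c ∧ H.Adj b c}.Nonempty :=
    Set.nonempty_of_ncard_ne_zero (by omega)
  obtain ⟨c, hc1, hc2⟩ := hSHne
  have hcardS : k - 2 ≤ (commonNbrs G a b).ncard :=
    le_trans hcard (Set.ncard_le_ncard hSsub (Set.toFinite _))
  set K' := delSub G a b H with hKdef
  have hK'conn : K'.Connected := delSub_connected hH.1 hc1 hc2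
  have hcb : c ≠ b := fun h => hc2.ne (h ▸ rfl)
  have hca : c ≠ a := fun h => hc1.ne (h ▸ rfl)
  have he'ne : s(ex, ey) ≠ s(a, b) := by
    intro hs
    rcases Sym2.eq_iff.1 hs with ⟨h1, h2⟩ | ⟨h1, h2⟩
    · exact hnadj (h1 ▸ h2 ▸ he')
    · exact hnadj (h1 ▸ h2 ▸ he'.symm)
  have he'K' : K'.Adj ex ey := ⟨heHadj, he'ne⟩
  have hK'truss : IsTruss G (k - 1) K' :=
    ⟨hK'conn, ⟨s(ex, ey), he'K'⟩, fun p q h => by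
      have h2 := delSub_tri htri h
      rw [← hKdef] at h2
      omega⟩
  have hkt1 : k - 1 ≤ t := le_trussNumber hK'truss he'K'
  have htEq : t = k - 1 := by omega
  have hcS : c ∈ commonNbrs G a b := hSsub ⟨hc1, hc2⟩
  have hacK' : K'.Adj a c := ⟨hc1, fun h => by
    rcases Sym2.eq_iff.1 h with ⟨-, h2⟩ | ⟨-, h2⟩
    exacts [hcb h2, hca h2]⟩
  have hsidemem : s(a, c) ∈ sideEdges G a b := ⟨c, hcS.1, hcS.2, Or.inl rfl⟩
  have hphiac : k - 1 ≤ trussNumber G s(a, c) := le_trussNumber hK'truss hacK'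
  have hbddmax : BddAbove (trussNumber G '' sideEdges G a b) :=
    ⟨Fintype.card V + 2, by rintro n ⟨e, -, rfl⟩; exact trussNumber_le_card G e⟩
  have hmax : t ≤ kmax G a b := by
    have h1 : trussNumber G s(a, c) ≤ kmax G a b := le_csSup hbddmax ⟨s(a, c), hsidemem, rfl⟩
    omega
  refine ⟨?_, le_min (by omega) hmax⟩
  by_contra hcon
  push_neg at hcon
  have hall : ∀ e ∈ sideEdges G a b, k ≤ trussNumber G e := by
    intro e heS
    have h1 : kmin G a b ≤ trussNumber G e := Nat.sInf_le ⟨e, heS, rfl⟩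
    omega
  have hsideedge : ∀ e ∈ sideEdges G a b, e ∈ G.edgeSet := by
    rintro e ⟨d, hd1, hd2, rfl | rfl⟩
    · exact (mem_edgeSet G).2 hd1
    · exact (mem_edgeSet G).2 hd2
  have hch : ∀ i : sideEdges G a b, ∃ T : G.Subgraph, IsTruss G k T ∧ (i : Sym2 V) ∈ T.edgeSet :=
    fun i => exists_truss (hsideedge i i.2) (hall i i.2)
  choose T hT1 hT2 using hch
  have haK' : a ∈ K'.verts := hHab.fst_mem
  have hbK' : b ∈ K'.verts := hHab.snd_mem
  have hmeet : ∀ i : sideEdges G a b, ((T i).verts ∩ K'.verts).Nonempty := by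
    intro i
    obtain ⟨d, hd1, hd2, hor⟩ := i.2
    have hedge := hT2 i
    rcases hor with he | he
    · rw [he] at hedge
      have hadj : (T i).Adj a d := hedge
      exact ⟨a, hadj.fst_mem, haK'⟩
    · rw [he] at hedge
      have hadj : (T i).Adj b d := hedge
      exact ⟨b, hadj.fst_mem, hbK'⟩
  set K : G.Subgraph := K' ⊔ ⨆ i, T i with hKdef2
  have hKconn : K.Connected := connected_sup_iSup K' T hK'conn (fun i => (hT1 i).1) hmeet
  have hK'leK : K' ≤ K := le_sup_left
  have hTleK : ∀ i, T i ≤ K := fun i => le_trans (le_iSup T i) le_sup_right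
  have hKtri : ∀ p q : V, K.Adj p q → k - 2 ≤ {d : V | K.Adj p d ∧ K.Adj q d}.ncard := by
    intro p q hpq
    have hfromT : ∀ i : sideEdges G a b, (T i).Adj p q →
        k - 2 ≤ {d : V | K.Adj p d ∧ K.Adj q d}.ncard := by
      intro i hadj
      refine le_trans ((hT1 i).2.2 p q hadj) (Set.ncard_le_ncard ?_ (Set.toFinite _))
      rintro d ⟨h1, h2⟩
      exact ⟨(hTleK i).2 h1, (hTleK i).2 h2⟩
    rcases Subgraph.sup_adj.1 hpq with hpq' | hsup
    swap
    · obtain ⟨i, hadj⟩ := Subgraph.iSup_adj.1 hsup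
      exact hfromT i hadj
    by_cases hD : (p = a ∧ H.Adj b q) ∨ (p = b ∧ H.Adj a q) ∨
        (q = a ∧ H.Adj b p) ∨ (q = b ∧ H.Adj a p)
    · have hside : s(p, q) ∈ sideEdges G a b := by
        rcases hD with ⟨rfl, hbq⟩ | ⟨rfl, haq⟩ | ⟨rfl, hbp⟩ | ⟨rfl, hap⟩
        · refine ⟨q, K'.adj_sub hpq', adj_of_insert (H.adj_sub hbq) ?_, Or.inl rfl⟩
          intro hs
          rcases Sym2.eq_iff.1 hs with ⟨h3, -⟩ | ⟨-, h4⟩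
          exacts [hab h3.symm, hpq'.1.ne h4.symm]
        · refine ⟨q, adj_of_insert (H.adj_sub haq) ?_, K'.adj_sub hpq', Or.inr rfl⟩
          intro hs
          rcases Sym2.eq_iff.1 hs with ⟨-, h4⟩ | ⟨h3, -⟩
          exacts [hpq'.1.ne h4.symm, hab h3]
        · refine ⟨p, K'.adj_sub hpq'.symm, adj_of_insert (H.adj_sub hbp) ?_, Or.inl Sym2.eq_swap⟩
          intro hs
          rcases Sym2.eq_iff.1 hs with ⟨h3, -⟩ | ⟨-, h4⟩
          exacts [hab h3.symm, hpq'.1.ne h4]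
        · refine ⟨p, adj_of_insert (H.adj_sub hap) ?_, K'.adj_sub hpq'.symm, Or.inr Sym2.eq_swap⟩
          intro hs
          rcases Sym2.eq_iff.1 hs with ⟨-, h4⟩ | ⟨h3, -⟩
          exacts [hpq'.1.ne h4, hab h3]
      have hadj : (T ⟨s(p, q), hside⟩).Adj p q := hT2 ⟨s(p, q), hside⟩
      exact hfromT _ hadj
    · push_neg at hD
      refine le_trans (htri p q hpq'.1) (Set.ncard_le_ncard ?_ (Set.toFinite _))
      rintro d ⟨h1, h2⟩
      refine ⟨hK'leK.2 ⟨h1, ?_⟩, hK'leK.2 ⟨h2, ?_⟩⟩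
      · intro hs
        rcases Sym2.eq_iff.1 hs with ⟨h3, h4⟩ | ⟨h3, h4⟩
        · exact hD.1 h3 (h4 ▸ h2).symm
        · exact hD.2.1 h3 (h4 ▸ h2).symm
      · intro hs
        rcases Sym2.eq_iff.1 hs with ⟨h3, h4⟩ | ⟨h3, h4⟩
        · exact hD.2.2.1 h3 (h4 ▸ h1).symm
        · exact hD.2.2.2 h3 (h4 ▸ h1).symm
  have hKtruss : IsTruss G k K :=
    ⟨hKconn, ⟨s(ex, ey), hK'leK.2 he'K'⟩, hKtri⟩
  have : k ≤ t := le_trussNumber hKtruss (hK'leK.2 he'K' : K.Adj ex ey)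
  omega
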